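/- Consider the hyperplane arrangement in the space {θ ∈ R^n : θ_1 + ... + θ_n = 0} given for each permutation ω ∈ S_n and each k = 1,...,n−1 by the cone C_ω = {θ : ε_k(ω) · Σ_{v ∈ R_k(ω)} θ_v > 0 for all k}, where R_k(ω) is the cyclic interval {ω(k+1), ω(k+1)+1, ..., ω(k)−1} (mod n) when ω(k) > ω(k+1), taken appropriately, and ε_k(ω) = +1 if ω(k) > ω(k+1) and −1 otherwise. Then the inequality for index k is not implied by the inequalities for the other indices s ≠ k; i.e., each of the n−1 defining inequalities of C_ω determines a genuine facet (wall) of C_ω. -/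
import Mathlib


open Finset

/-- The cyclic block of coordinates `{min(i,j)+1, …, max(i,j)}` attached to the pair
of indices `(i,j)`; these are the regions `R_k(ω)` of the hyperplane arrangement. -/
def region (n : ℕ) (i j : Fin n) : Finset (Fin n) :=
  Finset.univ.filter (fun v : Fin n => min i.1 j.1 < v.1 ∧ v.1 ≤ max i.1 j.1)

/-- The strict inequality attached to the consecutive pair at positions `k, k+1` of
`ω`: `ε_k(ω) · Σ_{v ∈ R_k(ω)} θ_v > 0` where `ε_k(ω) = +1` iff `ω(k) > ω(k+1)`. -/
def ineqAt (n : ℕ) (i j : Fin n) (θ : Fin n → ℝ) : Prop :=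
  if j.1 < i.1 then 0 < ∑ v ∈ region n i j, θ v else (∑ v ∈ region n i j, θ v) < 0

/-- In the hyperplane `{θ ∈ ℝⁿ : θ_1 + … + θ_n = 0}`, the defining
system of the cone `C_ω = {θ : ε_k(ω)·Σ_{v ∈ R_k(ω)} θ_v > 0 for all k}` is
irredundant: for each index `k` the `k`-th inequality is not implied by the others,
i.e. there exists `θ` satisfying all inequalities with index `s ≠ k` but failing the
`k`-th one.  Hence each of the `n-1` inequalities determines a genuine facet (wall)
of `C_ω`. -/
theorem chamber_inequalities_irredundant (n : ℕ) (hn : 2 ≤ n)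
    (ω : Equiv.Perm (Fin n)) (k : ℕ) (hk : k + 1 < n) :
    ∃ θ : Fin n → ℝ, (∑ v, θ v) = 0 ∧
      (∀ (m : ℕ) (hm : m + 1 < n), m ≠ k →
        ineqAt n (ω ⟨m, Nat.lt_of_succ_lt hm⟩) (ω ⟨m + 1, hm⟩) θ) ∧
      ¬ ineqAt n (ω ⟨k, Nat.lt_of_succ_lt hk⟩) (ω ⟨k + 1, hk⟩) θ := by
  classical
  -- values along the path ω(0), ω(1), …
  set c : ℕ → ℝ := fun m => -(m : ℝ) + (if k < m then 1 else 0) with hc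
  have hn1 : n - 1 < n := by omega
  -- prospective partial sums F(v) = θ_0 + … + θ_v
  set F : Fin n → ℝ := fun v => c (ω.symm v).1 with hF
  set G : ℕ → ℝ := fun t => if h : 0 < t ∧ t ≤ n then F ⟨t - 1, by omega⟩ else F ⟨n - 1, hn1⟩
    with hGdef
  set θ : Fin n → ℝ := fun v => G (v.1 + 1) - G v.1 with hθ
  have hG0 : G 0 = F ⟨n - 1, hn1⟩ := by simp [hGdef]
  have hGn : G n = F ⟨n - 1, hn1⟩ := by
    simp only [hGdef]
    rw [dif_pos ⟨by omega, le_refl n⟩]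
  have hGF : ∀ v : Fin n, G (v.1 + 1) = F v := by
    intro v
    simp only [hGdef]
    rw [dif_pos ⟨Nat.succ_pos _, by omega⟩]
    congr 1
  have hcm : ∀ m : ℕ, c m - c (m + 1) = if m = k then 0 else 1 := by
    intro m
    simp only [hc]
    rcases lt_trichotomy m k with h | h | h
    · rw [if_neg (by omega), if_neg (by omega), if_neg (by omega)]
      push_cast; ring
    · rw [if_neg (by omega), if_pos (by omega), if_pos h]
      push_cast; ring
    · rw [if_pos h, if_pos (by omega), if_neg (by omega)]
      push_cast; ring
  -- telescoping
  have tele : ∀ a b : ℕ, a ≤ b → b < n →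
      (∑ v ∈ univ.filter (fun v : Fin n => a < v.1 ∧ v.1 ≤ b), θ v)
        = G (b + 1) - G (a + 1) := by
    intro a b hab hb
    rw [Finset.sum_filter]
    rw [show (∑ v : Fin n, if a < v.1 ∧ v.1 ≤ b then θ v else 0)
        = ∑ i ∈ Finset.range n, (if a < i ∧ i ≤ b then G (i + 1) - G i else 0) from
      Fin.sum_univ_eq_sum_range (fun i => if a < i ∧ i ≤ b then G (i + 1) - G i else 0) n]
    rw [← Finset.sum_filter]
    have hset : (Finset.range n).filter (fun i => a < i ∧ i ≤ b)
        = Finset.Ico (a + 1) (b + 1) := by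
      ext i
      simp only [Finset.mem_filter, Finset.mem_range, Finset.mem_Ico]
      omega
    rw [hset, Finset.sum_Ico_eq_sum_range]
    have key : ∑ i ∈ Finset.range (b + 1 - (a + 1)),
        (G (a + 1 + i + 1) - G (a + 1 + i)) = G (a + 1 + (b + 1 - (a + 1))) - G (a + 1) :=
      Finset.sum_range_sub (fun i => G (a + 1 + i)) _
    calc ∑ i ∈ Finset.range (b + 1 - (a + 1)), (G (a + 1 + i + 1) - G (a + 1 + i))
        = G (a + 1 + (b + 1 - (a + 1))) - G (a + 1) := key
      _ = G (b + 1) - G (a + 1) := by congr 2; omega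
  -- sum over a region
  have hregion : ∀ i j : Fin n,
      (∑ v ∈ region n i j, θ v) = G (max i.1 j.1 + 1) - G (min i.1 j.1 + 1) := by
    intro i j
    exact tele (min i.1 j.1) (max i.1 j.1) (min_le_max) (by omega)
  -- reduction of each inequality to a comparison of c-values
  have hsum : ∀ m : ℕ, ∀ hm : m + 1 < n,
      (∑ v ∈ region n (ω ⟨m, Nat.lt_of_succ_lt hm⟩) (ω ⟨m + 1, hm⟩) , θ v)
          = (if (ω ⟨m + 1, hm⟩).1 < (ω ⟨m, Nat.lt_of_succ_lt hm⟩).1 then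
              c m - c (m + 1) else c (m + 1) - c m) := by
    intro m hm
    set i := ω ⟨m, Nat.lt_of_succ_lt hm⟩ with hi
    set j := ω ⟨m + 1, hm⟩ with hj
    have hFi : F i = c m := by simp [hF, hi]
    have hFj : F j = c (m + 1) := by simp [hF, hj]
    rw [hregion i j]
    by_cases h : j.1 < i.1
    · rw [if_pos h, max_eq_left h.le, min_eq_right h.le, hGF i, hGF j, hFi, hFj]
    · rw [if_neg h]
      have h' : i.1 ≤ j.1 := le_of_not_gt h
      rw [max_eq_right h', min_eq_left h', hGF i, hGF j, hFi, hFj]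
  refine ⟨θ, ?_, ?_, ?_⟩
  · rw [show (∑ v, θ v) = ∑ i ∈ Finset.range n, (G (i + 1) - G i) from
      Fin.sum_univ_eq_sum_range (fun i => G (i + 1) - G i) n,
      Finset.sum_range_sub G n, hGn, hG0]
    ring
  · intro m hm hmk
    unfold ineqAt
    have := hsum m hm
    by_cases h : (ω ⟨m + 1, hm⟩).1 < (ω ⟨m, Nat.lt_of_succ_lt hm⟩).1
    · rw [if_pos h]
      rw [if_pos h] at this
      rw [this, hcm m, if_neg hmk]
      norm_num
    · rw [if_neg h]
      rw [if_neg h] at this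
      rw [this]
      have : c (m + 1) - c m = -(c m - c (m + 1)) := by ring
      rw [this, hcm m, if_neg hmk]
      norm_num
  · unfold ineqAt
    have := hsum k hk
    by_cases h : (ω ⟨k + 1, hk⟩).1 < (ω ⟨k, Nat.lt_of_succ_lt hk⟩).1
    · rw [if_pos h]
      rw [if_pos h] at this
      rw [this, hcm k, if_pos rfl]
      norm_num
    · rw [if_neg h]
      rw [if_neg h] at this
      rw [this]
      have : c (k + 1) - c k = -(c k - c (k + 1)) := by ring
      rw [this, hcm k, if_pos rfl]
      norm_num
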